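/- arXiv:1112.2887 — 2 statements merged into one kernel-verified Lean document; each statement's English description precedes it below -/
import Mathlib

section
/- Suppose $(p_n, q_n)$ and $(\tilde p_n, \tilde q_n)$ are two pairs of polynomials, each of degree at most $n$ and not both zero, such that both $p_n(z)e^{-z/2} + q_n(z)e^{z/2}$ and $\tilde p_n(z)e^{-z/2} + \tilde q_n(z)e^{z/2}$ vanish (with multiplicity) at the $2n+1$ interpolation points $z_0,\dots,z_{2n}$. Then $p_n \tilde q_n = \tilde p_n q_n$ as polynomials; in other words, the rational functions $p_n/q_n$ and $\tilde p_n/\tilde q_n$ have the same irreducible form. -/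
open scoped BigOperators

open Filter Bornology

/-- A polynomial of degree `< m` evaluated at `w`, divided by `w ^ m`, tends to `0`
at infinity. -/
lemma eval_div_pow_tendsto_zero (D : Polynomial ℂ) (m : ℕ) (hD : D.degree < (m : ℕ)) :
    Tendsto (fun w : ℂ => D.eval w / w ^ m) (cobounded ℂ) (nhds 0) := by
  rcases eq_or_ne D 0 with rfl | hD0
  · simp only [Polynomial.eval_zero, zero_div]
    exact (tendsto_const_nhds : Tendsto (fun _ : ℂ => (0:ℂ)) (cobounded ℂ) (nhds 0))
  have hev : ∀ w : ℂ, D.eval w = ∑ i ∈ Finset.range m, D.coeff i * w ^ i := fun w =>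
    Polynomial.eval_eq_sum_range' ((Polynomial.natDegree_lt_iff_degree_lt hD0).2 hD) w
  have key : ∀ i ∈ Finset.range m,
      Tendsto (fun w : ℂ => D.coeff i * w ^ i / w ^ m) (cobounded ℂ) (nhds 0) := by
    intro i hi
    rw [Finset.mem_range] at hi
    have h1 : Tendsto (fun w : ℂ => (w⁻¹) ^ (m - i)) (cobounded ℂ) (nhds 0) := by
      have := tendsto_inv₀_cobounded (α := ℂ)
      have hmi : m - i ≠ 0 := Nat.sub_ne_zero_of_lt hi
      simpa [zero_pow hmi] using this.pow (m - i)
    have h2 : Tendsto (fun w : ℂ => D.coeff i * (w⁻¹) ^ (m - i)) (cobounded ℂ) (nhds 0) := by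
      simpa using h1.const_mul (D.coeff i)
    refine h2.congr' ?_
    filter_upwards [(tendsto_norm_cobounded_atTop (E := ℂ)).eventually_gt_atTop 0] with w hw
    have hw0 : w ≠ 0 := by simpa using (norm_pos_iff.mp hw)
    field_simp
    have hm : w ^ m = w ^ (m - i) * w ^ i := by
      rw [← pow_add]
      congr 1
      omega
    rw [hm]
    field_simp
    rw [one_div, inv_pow, mul_assoc, inv_mul_cancel₀ (pow_ne_zero _ hw0), mul_one]
  have := tendsto_finset_sum (Finset.range m) key
  simp only [Finset.sum_const_zero] at this
  refine this.congr ?_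
  intro w
  rw [hev w, Finset.sum_div]

/-- Uniqueness of the irreducible form: any two nontrivial pairs of polynomials of
degree at most `n` satisfying the interpolation conditions for `e^z` at the `2n+1`
points satisfy `p * q̃ = p̃ * q`, i.e. they define the same rational function. -/
theorem interpolant_irreducible_form_unique (n : ℕ) (zpts : Fin (2 * n + 1) → ℂ)
    (p q p' q' : Polynomial ℂ)
    (hpq : ¬(p = 0 ∧ q = 0)) (hpq' : ¬(p' = 0 ∧ q' = 0))
    (hdp : p.degree ≤ (n : ℕ)) (hdq : q.degree ≤ (n : ℕ))
    (hdp' : p'.degree ≤ (n : ℕ)) (hdq' : q'.degree ≤ (n : ℕ))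
    (h h' : ℂ → ℂ) (hh : Differentiable ℂ h) (hh' : Differentiable ℂ h')
    (hint : ∀ w : ℂ, p.eval w * Complex.exp (-(w / 2)) + q.eval w * Complex.exp (w / 2)
      = (∏ j, (w - zpts j)) * h w)
    (hint' : ∀ w : ℂ, p'.eval w * Complex.exp (-(w / 2)) + q'.eval w * Complex.exp (w / 2)
      = (∏ j, (w - zpts j)) * h' w) :
    p * q' = p' * q := by
  set D : Polynomial ℂ := p * q' - p' * q with hDdef
  -- G is the entire function (p h' - p' h) e^{-w/2}
  set G : ℂ → ℂ := fun w => (p.eval w * h' w - p'.eval w * h w) * Complex.exp (-(w / 2))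
    with hGdef
  have hGdiff : Differentiable ℂ G := by
    apply Differentiable.mul
    · exact ((p.differentiable.mul hh').sub (p'.differentiable.mul hh))
    · exact Complex.differentiable_exp.comp (differentiable_id.div_const 2).neg
  -- Key pointwise identity: D(w) = ω(w) * G(w)
  have hkey : ∀ w : ℂ, D.eval w = (∏ j, (w - zpts j)) * G w := by
    intro w
    have e1 := hint w
    have e2 := hint' w
    have hexp : Complex.exp (w / 2) * Complex.exp (-(w / 2)) = 1 := by
      rw [← Complex.exp_add]; simp
    have hmul : (p.eval w * q'.eval w - p'.eval w * q.eval w) * Complex.exp (w / 2)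
        = (∏ j, (w - zpts j)) * (p.eval w * h' w - p'.eval w * h w) := by
      have := congrArg (fun x => p.eval w * x) e2
      have h2 := congrArg (fun x => p'.eval w * x) e1
      ring_nf at this h2 ⊢
      linear_combination this - h2
    have : D.eval w * Complex.exp (w / 2) = (∏ j, (w - zpts j))
        * (p.eval w * h' w - p'.eval w * h w) := by
      simpa [hDdef] using hmul
    calc D.eval w = D.eval w * (Complex.exp (w / 2) * Complex.exp (-(w / 2))) := by
            rw [hexp, mul_one]
      _ = (D.eval w * Complex.exp (w / 2)) * Complex.exp (-(w / 2)) := by ring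
      _ = (∏ j, (w - zpts j)) * G w := by rw [this, hGdef]; ring
  -- degree bound on D
  have hDdeg : D.degree < ((2 * n + 1 : ℕ) : WithBot ℕ) := by
    have h1 : (p * q').degree ≤ ((2 * n : ℕ) : WithBot ℕ) := by
      refine (Polynomial.degree_mul_le p q').trans ?_
      calc p.degree + q'.degree ≤ (n : ℕ) + (n : ℕ) := add_le_add hdp hdq'
        _ = ((2 * n : ℕ) : WithBot ℕ) := by
            rw [← Nat.cast_add]; norm_num; ring
    have h2 : (p' * q).degree ≤ ((2 * n : ℕ) : WithBot ℕ) := by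
      refine (Polynomial.degree_mul_le p' q).trans ?_
      calc p'.degree + q.degree ≤ (n : ℕ) + (n : ℕ) := add_le_add hdp' hdq
        _ = ((2 * n : ℕ) : WithBot ℕ) := by
            rw [← Nat.cast_add]; norm_num; ring
    have := (Polynomial.degree_sub_le (p * q') (p' * q)).trans (max_le h1 h2)
    refine this.trans_lt ?_
    exact_mod_cast WithBot.coe_lt_coe.mpr (Nat.lt_succ_self (2 * n))
  -- G tends to 0 at infinity
  have hGtend : Tendsto G (cobounded ℂ) (nhds 0) := by
    have hfac1 : Tendsto (fun w : ℂ => D.eval w / w ^ (2 * n + 1)) (cobounded ℂ) (nhds 0) :=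
      eval_div_pow_tendsto_zero D (2 * n + 1) hDdeg
    -- second factor: w^{2n+1} / ∏ (w - z_j) → 1
    have hfac2 : Tendsto (fun w : ℂ => ∏ j, ((w - zpts j) / w)) (cobounded ℂ) (nhds 1) := by
      have : ∀ j : Fin (2 * n + 1), Tendsto (fun w : ℂ => (w - zpts j) / w)
          (cobounded ℂ) (nhds 1) := by
        intro j
        have h1 : Tendsto (fun w : ℂ => 1 - zpts j * w⁻¹) (cobounded ℂ) (nhds 1) := by
          have := (tendsto_inv₀_cobounded (α := ℂ)).const_mul (zpts j)
          simpa using (tendsto_const_nhds (x := (1 : ℂ))).sub this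
        refine h1.congr' ?_
        filter_upwards [(tendsto_norm_cobounded_atTop (E := ℂ)).eventually_gt_atTop 0] with w hw
        have hw0 : w ≠ 0 := by simpa using (norm_pos_iff.mp hw)
        field_simp
      simpa using tendsto_finset_prod Finset.univ (fun j _ => this j)
    have hfac2' : Tendsto (fun w : ℂ => (∏ j, ((w - zpts j) / w))⁻¹) (cobounded ℂ) (nhds 1) := by
      simpa using hfac2.inv₀ one_ne_zero
    have hprod : Tendsto (fun w : ℂ => (D.eval w / w ^ (2 * n + 1))
        * (∏ j, ((w - zpts j) / w))⁻¹) (cobounded ℂ) (nhds 0) := by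
      simpa using hfac1.mul hfac2'
    refine hprod.congr' ?_
    obtain ⟨M, hM⟩ := Finite.exists_le (fun j => ‖zpts j‖)
    filter_upwards [(tendsto_norm_cobounded_atTop (E := ℂ)).eventually_gt_atTop (max M 0)]
      with w hw
    have hw0 : w ≠ 0 := by
      intro hzero; rw [hzero] at hw; simp at hw
    have hwj : ∀ j : Fin (2 * n + 1), w - zpts j ≠ 0 := by
      intro j hzero
      have hwz : w = zpts j := sub_eq_zero.mp hzero
      rw [hwz] at hw
      exact absurd (hM j) (not_le.mpr (lt_of_le_of_lt (le_max_left M 0) hw))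
    have hprodne : (∏ j, (w - zpts j)) ≠ 0 := Finset.prod_ne_zero_iff.mpr fun j _ => hwj j
    have hsplit : (∏ j, ((w - zpts j) / w)) = (∏ j, (w - zpts j)) / w ^ (2 * n + 1) := by
      rw [Finset.prod_div_distrib, Finset.prod_const, Finset.card_univ, Fintype.card_fin]
    rw [hsplit, hkey w]
    field_simp
  -- Liouville: G is identically zero
  have hGzero : ∀ w : ℂ, G w = 0 := by
    intro w
    exact hGdiff.apply_eq_of_tendsto_cocompact w
      (by rwa [← Metric.cobounded_eq_cocompact])
  -- hence D = 0
  have hD0 : D = 0 := by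
    apply Polynomial.funext
    intro w
    rw [hkey w, hGzero w, mul_zero, Polynomial.eval_zero]
  have := sub_eq_zero.mp (by rw [← hDdef]; exact hD0)
  exact this
end

section
/- Let $P_n(z) = p_n(2nz)$ where $(p_n, q_n)$ satisfies the diagonal interpolation conditions for $e^z$ at points $z_0,\dots,z_{2n}$, and let $\Omega_n(z) = \prod_{j=0}^{2n}(z - \hat z_j)$ with $\hat z_j = z_j/(2n)$. Let $\Gamma_n$ be a counterclockwise closed contour enclosing all scaled points $\hat z_j$. Then the orthogonality relations $\int_{\Gamma_n} z^{j} P_n(z) \frac{e^{-2nz}}{\Omega_n(z)}\, dz = 0$ hold for $j = 0, 1, \dots, n-1$. -/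
set_option maxHeartbeats 1000000
set_option linter.unusedVariables false

open scoped BigOperators
open Complex Polynomial Metric Filter Real Topology


lemma aux_rat_integral_zero (N : ℕ) (a : Fin N → ℂ) (F : Polynomial ℂ) (m : ℕ)
    (hF : F.natDegree ≤ m) (hm : m + 2 ≤ N) (r : ℝ) (hr0 : 0 < r)
    (ha : ∀ i, ‖a i‖ < r) :
    (∮ z in C(0, r), F.eval z / ∏ i, (z - a i)) = 0 := by
  set g : ℂ → ℂ := fun z => F.eval z / ∏ i, (z - a i) with hg
  have hprod : ∀ z : ℂ, r ≤ ‖z‖ → (∏ i, (z - a i)) ≠ 0 := by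
    intro z hz
    refine Finset.prod_ne_zero_iff.2 fun i _ => sub_ne_zero.2 fun h => ?_
    rw [h] at hz
    exact absurd (lt_of_lt_of_le (ha i) hz) (lt_irrefl _)
  have hdiff : ∀ z : ℂ, r ≤ ‖z‖ → DifferentiableAt ℂ g z := by
    intro z hz
    exact (F.differentiableAt).div
      (DifferentiableAt.fun_finsetProd fun i _ => (differentiableAt_id.sub_const _))
      (hprod z hz)
  have hsame : ∀ R : ℝ, r ≤ R →
      (∮ z in C(0, r), g z) = ∮ z in C(0, R), g z := by
    intro R hR
    refine (circleIntegral_eq_of_differentiable_on_annulus_off_countable hr0 hR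
      Set.countable_empty ?_ ?_).symm
    · intro z hz
      have : r ≤ ‖z‖ := by
        have := hz.2
        simp only [mem_ball, Complex.dist_eq, not_lt, sub_zero] at this
        simpa using this
      exact (hdiff z this).continuousAt.continuousWithinAt
    · intro z hz
      have := hz.1.2
      simp only [mem_closedBall, Complex.dist_eq, not_le, sub_zero] at this
      exact hdiff z (le_of_lt (by simpa using this))
  set C : ℝ := ∑ k ∈ Finset.range (m + 1), ‖F.coeff k‖ with hC
  have hC0 : 0 ≤ C := Finset.sum_nonneg fun _ _ => norm_nonneg _
  have hbound : ∀ R : ℝ, 1 ≤ R → 2 * r ≤ R → ∀ z : ℂ, ‖z‖ = R →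
      ‖g z‖ ≤ C * 2 ^ N / R ^ 2 := by
    intro R h1 h2 z hz
    have hR0 : (0:ℝ) < R := lt_of_lt_of_le one_pos h1
    have hnum : ‖F.eval z‖ ≤ C * R ^ m := by
      rw [Polynomial.eval_eq_sum_range' (lt_of_le_of_lt hF (Nat.lt_succ_self m))]
      calc ‖∑ k ∈ Finset.range (m + 1), F.coeff k * z ^ k‖
          ≤ ∑ k ∈ Finset.range (m + 1), ‖F.coeff k * z ^ k‖ := norm_sum_le _ _
        _ ≤ ∑ k ∈ Finset.range (m + 1), ‖F.coeff k‖ * R ^ m := by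
            refine Finset.sum_le_sum fun k hk => ?_
            rw [norm_mul, norm_pow, hz]
            exact mul_le_mul_of_nonneg_left
              (pow_le_pow_right₀ h1 (Nat.lt_succ_iff.1 (Finset.mem_range.1 hk)))
              (norm_nonneg _)
        _ = C * R ^ m := by rw [← Finset.sum_mul]
    have hden : (R / 2) ^ N ≤ ‖∏ i, (z - a i)‖ := by
      rw [norm_prod]
      calc (R / 2 : ℝ) ^ N = ∏ _i : Fin N, (R / 2) := by
            rw [Finset.prod_const, Finset.card_univ, Fintype.card_fin]
        _ ≤ ∏ i : Fin N, ‖z - a i‖ := by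
            refine Finset.prod_le_prod (fun _ _ => by positivity) fun i _ => ?_
            have h3 : ‖a i‖ < r := ha i
            have h4 : ‖z‖ - ‖a i‖ ≤ ‖z - a i‖ := norm_sub_norm_le _ _
            have h5 : r ≤ R / 2 := by linarith
            calc (R / 2 : ℝ) = R - R / 2 := by ring
              _ ≤ ‖z‖ - ‖a i‖ := by rw [hz]; linarith
              _ ≤ ‖z - a i‖ := h4
    have hden0 : (0:ℝ) < (R / 2) ^ N := by positivity
    calc ‖g z‖ = ‖F.eval z‖ / ‖∏ i, (z - a i)‖ := norm_div _ _
      _ ≤ (C * R ^ m) / (R / 2) ^ N :=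
          div_le_div₀ (mul_nonneg hC0 (pow_nonneg hR0.le m)) hnum hden0 hden
      _ ≤ C * 2 ^ N / R ^ 2 := by
          rw [div_le_div_iff₀ hden0 (pow_pos hR0 2)]
          have hRpow : R ^ m * R ^ 2 ≤ R ^ N := by
            rw [← pow_add]; exact pow_le_pow_right₀ h1 hm
          have h2N : (R / 2 : ℝ) ^ N = R ^ N / 2 ^ N := div_pow R 2 N
          rw [h2N]
          have he : C * 2 ^ N * (R ^ N / 2 ^ N) = C * R ^ N := by field_simp
          rw [he]
          calc C * R ^ m * R ^ 2 = C * (R ^ m * R ^ 2) := by ring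
            _ ≤ C * R ^ N := mul_le_mul_of_nonneg_left hRpow hC0
  have key : ∀ R : ℝ, max 1 (max (2 * r) r) ≤ R →
      ‖∮ z in C(0, r), g z‖ ≤ 2 * π * (C * 2 ^ N) / R := by
    intro R hR
    have h1 : (1:ℝ) ≤ R := le_trans (le_max_left _ _) hR
    have h2 : 2 * r ≤ R := le_trans (le_trans (le_max_left _ _) (le_max_right _ _)) hR
    have h3 : r ≤ R := le_trans (le_trans (le_max_right _ _) (le_max_right _ _)) hR
    have hR0 : (0:ℝ) < R := lt_of_lt_of_le one_pos h1
    rw [hsame R h3]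
    have := circleIntegral.norm_integral_le_of_norm_le_const (f := g) (c := 0)
      (R := R) (C := C * 2 ^ N / R ^ 2) hR0.le ?_
    · refine this.trans (le_of_eq ?_)
      field_simp
    · intro z hz
      have hz' : ‖z‖ = R := by
        simpa [Complex.dist_eq, sub_zero] using hz
      exact hbound R h1 h2 z hz'
  have hlim : Tendsto (fun R : ℝ => 2 * π * (C * 2 ^ N) / R) atTop (𝓝 0) :=
    tendsto_const_nhds.div_atTop tendsto_id
  have hev : ∀ᶠ R in (atTop : Filter ℝ),
      ‖∮ z in C(0, r), g z‖ ≤ 2 * π * (C * 2 ^ N) / R :=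
    (eventually_ge_atTop (max 1 (max (2 * r) r))).mono key
  have : ‖∮ z in C(0, r), g z‖ ≤ 0 := ge_of_tendsto hlim hev
  exact norm_le_zero_iff.1 this

/-- Orthogonality relations: if `(p, q)` solves the diagonal interpolation problem for
`e^z` at the points `z_j`, then the scaled polynomial `P(z) = p(2nz)` satisfies
`∮ z^j P(z) e^{-2nz} / Ω(z) dz = 0` for `j = 0, …, n-1`, over any circle `|z| = r`
enclosing all the scaled points `ẑ_j = z_j/(2n)`. -/
theorem interpolant_orthogonality (n : ℕ) (hn : 0 < n) (zpts : Fin (2 * n + 1) → ℂ)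
    (p q : Polynomial ℂ)
    (hdp : p.degree ≤ (n : ℕ)) (hdq : q.degree ≤ (n : ℕ))
    (h : ℂ → ℂ) (hh : Differentiable ℂ h)
    (hint : ∀ w : ℂ, p.eval w * Complex.exp (-(w / 2)) + q.eval w * Complex.exp (w / 2)
      = (∏ i, (w - zpts i)) * h w)
    (r : ℝ) (hr : ∀ i, ‖zpts i / (2 * n)‖ < r)
    (j : ℕ) (hj : j < n) :
    (∮ z in C(0, r), z ^ j * p.eval (2 * n * z) * Complex.exp (-(2 * n * z))
        / ∏ i, (z - zpts i / (2 * n))) = 0 := by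
  have hn' : (n : ℂ) ≠ 0 := Nat.cast_ne_zero.2 hn.ne'
  have hc : (2 * (n : ℂ)) ≠ 0 := mul_ne_zero two_ne_zero hn'
  have hr0 : 0 < r := lt_of_le_of_lt (norm_nonneg _) (hr 0)
  set a : Fin (2 * n + 1) → ℂ := fun i => zpts i / (2 * n) with haeq
  set F : Polynomial ℂ := X ^ j * q.comp (Polynomial.C (2 * (n:ℂ)) * X) with hFeq
  have hFeval : ∀ z : ℂ, F.eval z = z ^ j * q.eval (2 * n * z) := by
    intro z; simp [hFeq]
  set f1 : ℂ → ℂ := fun z =>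
    z ^ j * ((2 * (n:ℂ)) ^ (2 * n + 1) *
      (h (2 * n * z) * Complex.exp (-(2 * n * z / 2)))) with hf1eq
  -- the product scales
  have hscale : ∀ z : ℂ, (∏ i, (2 * n * z - zpts i))
      = (2 * (n:ℂ)) ^ (2 * n + 1) * ∏ i, (z - a i) := by
    intro z
    calc (∏ i, (2 * n * z - zpts i)) = ∏ i, (2 * (n:ℂ)) * (z - a i) := by
          refine Finset.prod_congr rfl fun i _ => ?_
          field_simp [haeq]
          have hai : (n:ℂ) * a i * 2 = zpts i := by
            simp only [haeq]; field_simp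
          linear_combination hai
      _ = (2 * (n:ℂ)) ^ (2 * n + 1) * ∏ i, (z - a i) := by
          rw [Finset.prod_mul_distrib, Finset.prod_const, Finset.card_univ,
            Fintype.card_fin]
  -- the key pointwise identity on the sphere
  have hEq : Set.EqOn
      (fun z : ℂ => z ^ j * p.eval (2 * n * z) * Complex.exp (-(2 * n * z))
        / ∏ i, (z - a i))
      (fun z : ℂ => f1 z - F.eval z / ∏ i, (z - a i)) (Metric.sphere (0:ℂ) r) := by
    intro z hz
    have hzr : ‖z‖ = r := by
      simpa [Complex.dist_eq, sub_zero] using hz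
    have hΩ : (∏ i, (z - a i)) ≠ 0 := by
      refine Finset.prod_ne_zero_iff.2 fun i _ => sub_ne_zero.2 fun hzz => ?_
      rw [hzz] at hzr
      exact absurd hzr.symm.le (not_le.2 (hr i))
    have hw := hint (2 * n * z)
    have hexp : Complex.exp (-(2 * n * z))
        = Complex.exp (-(2 * n * z / 2)) * Complex.exp (-(2 * n * z / 2)) := by
      rw [← Complex.exp_add]; ring_nf
    have hexp2 : Complex.exp (2 * n * z / 2) * Complex.exp (-(2 * n * z / 2)) = 1 := by
      rw [← Complex.exp_add]; simp
    have hpw : p.eval (2 * n * z) * Complex.exp (-(2 * n * z))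
        = (2 * (n:ℂ)) ^ (2 * n + 1) * (∏ i, (z - a i)) *
            (h (2 * n * z) * Complex.exp (-(2 * n * z / 2)))
          - q.eval (2 * n * z) := by
      have h1 : p.eval (2 * n * z) * Complex.exp (-(2 * n * z / 2))
          = (∏ i, (2 * n * z - zpts i)) * h (2 * n * z)
            - q.eval (2 * n * z) * Complex.exp (2 * n * z / 2) := by
        linear_combination hw
      calc p.eval (2 * n * z) * Complex.exp (-(2 * n * z))
          = p.eval (2 * n * z) * Complex.exp (-(2 * n * z / 2))
              * Complex.exp (-(2 * n * z / 2)) := by rw [hexp]; ring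
        _ = ((∏ i, (2 * n * z - zpts i)) * h (2 * n * z)
              - q.eval (2 * n * z) * Complex.exp (2 * n * z / 2))
              * Complex.exp (-(2 * n * z / 2)) := by rw [h1]
        _ = (∏ i, (2 * n * z - zpts i)) * h (2 * n * z)
              * Complex.exp (-(2 * n * z / 2))
              - q.eval (2 * n * z) *
                (Complex.exp (2 * n * z / 2) * Complex.exp (-(2 * n * z / 2))) := by
            ring
        _ = (2 * (n:ℂ)) ^ (2 * n + 1) * (∏ i, (z - a i)) *
              (h (2 * n * z) * Complex.exp (-(2 * n * z / 2)))
              - q.eval (2 * n * z) := by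
            rw [hexp2, hscale]; ring
    simp only
    rw [show z ^ j * p.eval (2 * n * z) * Complex.exp (-(2 * n * z))
        = z ^ j * (p.eval (2 * n * z) * Complex.exp (-(2 * n * z))) by ring, hpw,
      hFeval, hf1eq]
    field_simp
  -- rewrite the integral
  rw [circleIntegral.integral_congr hr0.le hEq]
  -- differentiability of f1
  have hf1d : Differentiable ℂ f1 := by
    apply Differentiable.mul (differentiable_pow j)
    apply Differentiable.const_mul
    apply Differentiable.mul
    · exact hh.comp ((differentiable_const _).mul differentiable_id)
    · exact Complex.differentiable_exp.comp
        (((differentiable_const _).mul differentiable_id).div_const 2).neg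
  -- the rational part is continuous on the sphere
  have hratc : ContinuousOn (fun z : ℂ => F.eval z / ∏ i, (z - a i)) (Metric.sphere (0:ℂ) r) := by
    intro z hz
    have hzr : ‖z‖ = r := by simpa [Complex.dist_eq, sub_zero] using hz
    have hΩ : (∏ i, (z - a i)) ≠ 0 := by
      refine Finset.prod_ne_zero_iff.2 fun i _ => sub_ne_zero.2 fun hzz => ?_
      rw [hzz] at hzr
      exact absurd hzr.symm.le (not_le.2 (hr i))
    exact (((F.differentiableAt).div
      (DifferentiableAt.fun_finsetProd fun i _ => (differentiableAt_id.sub_const _))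
      hΩ).continuousAt).continuousWithinAt
  have hint1 : CircleIntegrable f1 0 r :=
    (hf1d.continuous.continuousOn).circleIntegrable hr0.le
  have hint2 : CircleIntegrable (fun z : ℂ => F.eval z / ∏ i, (z - a i)) 0 r :=
    hratc.circleIntegrable hr0.le
  rw [circleIntegral.integral_sub hint1 hint2]
  -- first integral vanishes by Cauchy–Goursat
  have hI1 : (∮ z in C(0, r), f1 z) = 0 := by
    refine circleIntegral_eq_zero_of_differentiable_on_off_countable hr0.le
      Set.countable_empty (hf1d.continuous.continuousOn) fun z _ => hf1d z
  -- second integral vanishes by the auxiliary lemma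
  have hI2 : (∮ z in C(0, r), F.eval z / ∏ i, (z - a i)) = 0 := by
    refine aux_rat_integral_zero (2 * n + 1) a F (2 * n - 1) ?_ (by omega) r hr0 hr
    have hq : q.natDegree ≤ n := Polynomial.natDegree_le_iff_degree_le.2 hdq
    calc F.natDegree ≤ (X ^ j : Polynomial ℂ).natDegree
          + (q.comp (Polynomial.C (2 * (n:ℂ)) * X)).natDegree :=
        Polynomial.natDegree_mul_le
      _ ≤ j + n := by
          rw [Polynomial.natDegree_X_pow, Polynomial.natDegree_comp,
            Polynomial.natDegree_C_mul hc, Polynomial.natDegree_X, mul_one]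
          omega
      _ ≤ 2 * n - 1 := by omega
  rw [hI1, hI2, sub_zero]
end
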